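/- Let f be an asymptotically identical transformation of G = ℝ × ℝ³ and let I = (a, b] = (a₁,b₁] × (a₂,b₂] × (a₃,b₃] ⊆ ℝ³ be a half-open interval with aᵢ < bᵢ. For every ε with 0 < ε < min{b₁−a₁, b₂−a₂, b₃−a₃}/2, set I₋ε := (a+ε, b−ε] and I₊ε := (a−ε, b+ε] (where a±ε means adding ±ε to each coordinate). Then there exists t₀ such that for all t ≥ t₀ one has the inclusions of time-t cross-sections I₋εᶜ(t) ⊆ f(Iᶜ)(t) ⊆ I₊εᶜ(t). -/

import Mathlib

open Filter Topology Set

noncomputable section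

/-- Euclidean 3-space. -/
abbrev E3 : Type := EuclideanSpace ℝ (Fin 3)

/-- The Galilean space-time `G = ℝ × ℝ³`. -/
abbrev Gal : Type := ℝ × E3

/-- A transformation (homeomorphism) of `G` is causal if it preserves the time
ordering of events: `P_T(u) < P_T(w)` implies `P_T(f(u)) < P_T(f(w))`. -/
def Causal (f : Gal ≃ₜ Gal) : Prop :=
  ∀ u w : Gal, u.1 < w.1 → (f u).1 < (f w).1

/-- The semitrajectory in `G` which is the graph of the curve `γ` on `[t₀, ∞)`. -/
def semitraj (t₀ : ℝ) (γ : ℝ → E3) : Set Gal :=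
  (fun t => (t, γ t)) '' Set.Ici t₀

/-- `S ⊆ G` is a semitrajectory: the graph of a continuous curve `γ : [t₀, ∞) → ℝ³`. -/
def IsSemitraj (S : Set Gal) : Prop :=
  ∃ (t₀ : ℝ) (γ : ℝ → E3), ContinuousOn γ (Set.Ici t₀) ∧ S = semitraj t₀ γ

/-- `S` is an asymptotically regular semitrajectory with asymptotic velocity `v`,
i.e. `S` is the graph of a continuous curve `γ : [t₀, ∞) → ℝ³` with `γ(t)/t → v`. -/
def HasAsympVel (S : Set Gal) (v : E3) : Prop :=
  ∃ (t₀ : ℝ) (γ : ℝ → E3), ContinuousOn γ (Set.Ici t₀) ∧ S = semitraj t₀ γ ∧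
    Tendsto (fun t : ℝ => t⁻¹ • γ t) atTop (𝓝 v)

/-- `F` is the asymptotic transform of `f`: for every `v`, every asymptotically regular
semitrajectory `S` with `ω(S) = v` has `ω(f(S)) = F v`.  (In particular the existence of
such an `F` says exactly that `f` is asymptotically regular at every point.) -/
def IsAsympTransform (f : Gal ≃ₜ Gal) (F : E3 → E3) : Prop :=
  ∀ (v : E3) (S : Set Gal), HasAsympVel S v → HasAsympVel (f '' S) (F v)

/-- `f` is asymptotically regular: at every `v ∈ V` there is a `v′` such that every
asymptotically regular semitrajectory with asymptotic velocity `v` is mapped to one with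
asymptotic velocity `v′`. -/
def AsympReg (f : Gal ≃ₜ Gal) : Prop :=
  ∃ F : E3 → E3, IsAsympTransform f F

/-- `f` is an asymptotic homeomorphism: both `f` and `f⁻¹` are asymptotically regular. -/
def AsympHomeo (f : Gal ≃ₜ Gal) : Prop := AsympReg f ∧ AsympReg f.symm

/-- `f` is an asymptotically identical transformation: a causal asymptotic
homeomorphism with `f⁺ = id`. -/
def AsympIdentical (f : Gal ≃ₜ Gal) : Prop :=
  Causal f ∧ AsympHomeo f ∧ IsAsympTransform f (id : E3 → E3)

/-- `f` is an asymptotically Euclidean transformation: a causal asymptotic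
homeomorphism with `f⁺(v) = R v − v₀` for some orthogonal `R` and `v₀ ∈ ℝ³`. -/
def AsympEuclidean (f : Gal ≃ₜ Gal) : Prop :=
  Causal f ∧ AsympHomeo f ∧
    ∃ (R : E3 ≃ₗᵢ[ℝ] E3) (v₀ : E3), IsAsympTransform f (fun v => R v - v₀)

/-- `Δᶜ := {(t, v t) ∈ G : t ≥ 0, v ∈ Δ}` for `Δ ⊆ ℝ³`. -/
def cone (Δ : Set E3) : Set Gal := {p : Gal | ∃ t ≥ (0 : ℝ), ∃ v ∈ Δ, p = (t, t • v)}

/-- The time-`t` cross-section `A(t) := {x ∈ ℝ³ : (t,x) ∈ A}` of `A ⊆ G`. -/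
def crossSec (A : Set Gal) (t : ℝ) : Set E3 := {x : E3 | (t, x) ∈ A}

/-- The half-open interval `(a, b] = (a₁,b₁] × (a₂,b₂] × (a₃,b₃] ⊆ ℝ³`. -/
def interval (a b : Fin 3 → ℝ) : Set E3 := {v : E3 | ∀ i, a i < v i ∧ v i ≤ b i}

-- ## Auxiliary lemmas


lemma abs_apply_le_norm (y : E3) (i : Fin 3) : |y i| ≤ ‖y‖ := by
  have h := EuclideanSpace.norm_eq y
  rw [h]
  have : |y i| = Real.sqrt (‖y i‖ ^ 2) := by
    rw [Real.sqrt_sq_eq_abs]; simp [Real.norm_eq_abs, abs_abs]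
  rw [this]
  apply Real.sqrt_le_sqrt
  exact Finset.single_le_sum (f := fun j => ‖y j‖ ^ 2)
    (fun j _ => sq_nonneg _) (Finset.mem_univ i)

lemma isCompact_K (a b : Fin 3 → ℝ) :
    IsCompact {v : E3 | ∀ i, a i ≤ v i ∧ v i ≤ b i} := by
  have h1 : IsCompact (Set.Icc a b) := isCompact_Icc
  have h2 := h1.image (EuclideanSpace.equiv (Fin 3) ℝ).symm.continuous
  convert h2 using 1
  ext v
  constructor
  · intro hv
    refine ⟨fun i => v i, ?_, rfl⟩
    rw [Set.mem_Icc]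
    exact ⟨fun i => (hv i).1, fun i => (hv i).2⟩
  · rintro ⟨w, hw, rfl⟩ i
    rw [Set.mem_Icc] at hw
    exact ⟨hw.1 i, hw.2 i⟩

lemma time_bound (f : Gal ≃ₜ Gal) (hc : Causal f) (M : ℝ) :
    ∃ N : ℝ, ∀ p : Gal, p.1 ≤ M → (f p).1 ≤ N := by
  refine ⟨(f (M + 1, 0)).1, fun p hp => ?_⟩
  exact (hc p (M + 1, 0) (by simpa using lt_of_le_of_lt hp (lt_add_one M))).le

lemma mem_semitraj_iff {t₀ : ℝ} {γ : ℝ → E3} {p : Gal} :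
    p ∈ semitraj t₀ γ ↔ t₀ ≤ p.1 ∧ p.2 = γ p.1 := by
  constructor
  · rintro ⟨t, ht, rfl⟩; exact ⟨ht, rfl⟩
  · intro ⟨h1, h2⟩; exact ⟨p.1, h1, by simp [← h2]⟩

lemma vel_unique {S : Set Gal} {v w : E3} (hv : HasAsympVel S v) (hw : HasAsympVel S w) :
    v = w := by
  obtain ⟨t₀, γ, -, rfl, hγ⟩ := hv
  obtain ⟨t₁, δ, -, hS, hδ⟩ := hw
  refine tendsto_nhds_unique (hγ.congr' ?_) hδ
  filter_upwards [eventually_ge_atTop t₀, eventually_ge_atTop t₁] with t h0 h1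
  have : ((t, γ t) : Gal) ∈ semitraj t₁ δ := by
    rw [← hS]; exact ⟨t, h0, rfl⟩
  rw [mem_semitraj_iff] at this
  rw [show γ t = δ t from this.2]

lemma line_vel (v : E3) : HasAsympVel (semitraj 1 (fun t => t • v)) v := by
  refine ⟨1, _, (continuous_id.smul continuous_const).continuousOn, rfl, ?_⟩
  apply tendsto_const_nhds.congr'
  filter_upwards [eventually_ge_atTop (1:ℝ)] with t ht
  have : t ≠ 0 := by linarith
  simp [smul_smul, inv_mul_cancel₀ this]

lemma symm_transform (f : Gal ≃ₜ Gal) (hf : AsympIdentical f) :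
    IsAsympTransform f.symm id := by
  obtain ⟨F', hF'⟩ := hf.2.1.2
  have hFid : ∀ v, F' v = v := by
    intro v
    have h1 := hF' v _ (line_vel v)
    have h2 := hf.2.2 (F' v) _ h1
    have h3 : f '' (f.symm '' semitraj 1 (fun t => t • v)) = semitraj 1 (fun t => t • v) := by
      rw [Set.image_image]; simp
    rw [h3] at h2
    exact vel_unique h2 (line_vel v)
  intro v S hS
  have := hF' v S hS
  rwa [hFid v] at this

-- subsequence with strictly increasing values, first ≥ 1
lemma exists_subseq_strict (u : ℕ → ℝ) (hu : Tendsto u atTop atTop) :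
    ∃ φ : ℕ → ℕ, StrictMono φ ∧ StrictMono (u ∘ φ) ∧ 1 ≤ u (φ 0) := by
  have key : ∀ (n : ℕ) (c : ℝ), ∃ m, n < m ∧ c < u m := by
    intro n c
    obtain ⟨m, hm1, hm2⟩ := ((hu.eventually (eventually_gt_atTop c)).and
      (eventually_gt_atTop n)).exists
    exact ⟨m, hm2, hm1⟩
  obtain ⟨m₀, hm₀⟩ := (hu.eventually (eventually_ge_atTop (1:ℝ))).exists
  let φ : ℕ → ℕ := fun n => Nat.rec m₀ (fun _ k => (key k (u k)).choose) n
  have hφsucc : ∀ n, φ n < φ (n+1) ∧ u (φ n) < u (φ (n+1)) := by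
    intro n
    exact (key (φ n) (u (φ n))).choose_spec
  refine ⟨φ, strictMono_nat_of_lt_succ (fun n => (hφsucc n).1),
    strictMono_nat_of_lt_succ (fun n => (hφsucc n).2), hm₀⟩

open Classical in
lemma traj (s : ℕ → ℝ) (hs : StrictMono s) (hs1 : 1 ≤ s 0)
    (hstop : Tendsto s atTop atTop) (v : ℕ → E3) (vlim : E3)
    (hv : Tendsto v atTop (𝓝 vlim)) :
    ∃ S : Set Gal, HasAsympVel S vlim ∧ ∀ n, (s n, s n • v n) ∈ S := by
  have hex : ∀ t : ℝ, ∃ n, t < s (n + 1) := by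
    intro t
    obtain ⟨n, hn⟩ := (hstop.eventually (eventually_gt_atTop t)).exists
    exact ⟨n, hn.trans_le (hs.monotone (Nat.le_succ n))⟩
  set p : ℕ → E3 := fun n => s n • v n with hp
  set N : ℝ → ℕ := fun t => Nat.find (hex t) with hN
  set A : ℕ → ℝ → E3 :=
    fun n t => p n + ((t - s n) / (s (n+1) - s n)) • (p (n+1) - p n) with hA
  set γ : ℝ → E3 := fun t => A (N t) t with hγ
  have hslt : ∀ n, s n < s (n+1) := fun n => hs (Nat.lt_succ_self n)
  have hsne : ∀ n, s (n+1) - s n ≠ 0 := fun n => ne_of_gt (sub_pos.2 (hslt n))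
  have hspos : ∀ n, 0 < s n := fun n =>
    lt_of_lt_of_le one_pos (hs1.trans (hs.monotone (Nat.zero_le n)))
  have hA_cont : ∀ n, Continuous (A n) := by
    intro n
    exact continuous_const.add ((continuous_id.sub continuous_const).div_const _ |>.smul continuous_const)
  have hA_left : ∀ n, A n (s n) = p n := by intro n; simp [hA]
  have hA_right : ∀ n, A n (s (n+1)) = p (n+1) := by
    intro n
    simp only [hA, div_self (hsne n), one_smul]
    abel
  have hN1 : ∀ t, t < s (N t + 1) := fun t => Nat.find_spec (hex t)
  have hN2 : ∀ t n, n < N t → s (n+1) ≤ t := by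
    intro t n hn
    exact le_of_not_gt (Nat.find_min (hex t) hn)
  have hNeq : ∀ (t : ℝ) (n : ℕ), t < s (n+1) → (n = 0 ∨ s n ≤ t) → N t = n := by
    intro t n h1 h2
    rw [hN]
    rw [Nat.find_eq_iff]
    refine ⟨h1, fun m hm hlt => ?_⟩
    rcases h2 with rfl | h2
    · exact absurd hm (Nat.not_lt_zero m)
    · have : s (m+1) ≤ s n := hs.monotone hm
      exact absurd (this.trans h2) (not_le.2 hlt)
  have hNge : ∀ (t : ℝ) (n : ℕ), s n ≤ t → n ≤ N t := by
    intro t n hn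
    rw [hN, Nat.le_find_iff]
    intro m hm
    push_neg
    exact (hs.monotone hm).trans hn
  have hγp : ∀ n, γ (s n) = p n := by
    intro n
    have : N (s n) = n := hNeq (s n) n (hslt n) (Or.inr le_rfl)
    rw [hγ]; simp only [this]; exact hA_left n
  -- continuity
  have hγcont : Continuous γ := by
    rw [continuous_iff_continuousAt]
    intro t₀
    by_cases hc1 : N t₀ = 0 ∨ s (N t₀) < t₀
    · -- locally N is constant
      set n := N t₀ with hn
      have hopen : ∃ U : Set ℝ, IsOpen U ∧ t₀ ∈ U ∧ ∀ t ∈ U, N t = n := by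
        rcases hc1 with h0 | hlt
        · refine ⟨Iio (s 1), isOpen_Iio, ?_, fun t ht => ?_⟩
          · have := hN1 t₀
            rw [← hn, h0] at this
            simpa using this
          · rw [h0]
            exact hNeq t 0 ht (Or.inl rfl)
        · exact ⟨Ioo (s n) (s (n+1)), isOpen_Ioo, ⟨hlt, hN1 t₀⟩,
            fun t ht => hNeq t n ht.2 (Or.inr ht.1.le)⟩
      obtain ⟨U, hUo, hU0, hUN⟩ := hopen
      have : γ =ᶠ[𝓝 t₀] A n := by
        filter_upwards [hUo.mem_nhds hU0] with t ht
        rw [hγ]; simp only [hUN t ht]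
      exact ((hA_cont n).continuousAt).congr this.symm
    · push_neg at hc1
      obtain ⟨hn0, hle⟩ := hc1
      set n := N t₀ with hn
      have hsn : s n = t₀ := le_antisymm (by
        have h := hN2 t₀ (n-1) (Nat.sub_lt (Nat.pos_of_ne_zero hn0) one_pos)
        have e : n - 1 + 1 = n := Nat.succ_pred_eq_of_pos (Nat.pos_of_ne_zero hn0)
        rwa [e] at h) hle
      have hn1 : 1 ≤ n := Nat.pos_of_ne_zero hn0
      -- right continuity
      have hright : ContinuousWithinAt γ (Ici t₀) t₀ := by
        have hmem : Ico t₀ (s (n+1)) ∈ 𝓝[≥] t₀ :=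
          Ico_mem_nhdsGE (hsn ▸ hslt n)
        have hEq : γ =ᶠ[𝓝[≥] t₀] A n := by
          filter_upwards [hmem] with t ht
          rw [hγ]; simp only [hNeq t n ht.2 (Or.inr (hsn.le.trans ht.1))]
        have hval : γ t₀ = A n t₀ := by rw [hγ]
        have hlim : Tendsto (A n) (𝓝[≥] t₀) (𝓝 (γ t₀)) := by
          rw [hval]
          exact ((hA_cont n).continuousAt).tendsto.mono_left nhdsWithin_le_nhds
        exact hlim.congr' hEq.symm
      -- left continuity
      have hleft : ContinuousWithinAt γ (Iio t₀) t₀ := by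
        have hmem : Ioo (s (n-1)) (s n) ∈ 𝓝[<] t₀ := by
          rw [← hsn]
          exact Ioo_mem_nhdsLT (hs (Nat.pred_lt hn0))
        have hEq : γ =ᶠ[𝓝[<] t₀] A (n-1) := by
          filter_upwards [hmem] with t ht
          have h1 : t < s ((n-1)+1) := by
            have e : n - 1 + 1 = n := Nat.succ_pred_eq_of_pos hn1
            rw [e]
            exact ht.2
          rw [hγ]; simp only [hNeq t (n-1) h1 (Or.inr ht.1.le)]
        have hlim : Tendsto (A (n-1)) (𝓝[<] t₀) (𝓝 (γ t₀)) := by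
          have h1 : A (n-1) t₀ = γ t₀ := by
            have e : n - 1 + 1 = n := Nat.succ_pred_eq_of_pos hn1
            rw [← hsn, show s n = s ((n-1)+1) by rw [e],
              hA_right (n-1), ← hγp ((n-1)+1), e]
          rw [← h1]
          exact ((hA_cont (n-1)).continuousAt).tendsto.mono_left nhdsWithin_le_nhds
        exact hlim.congr' hEq.symm
      have := hleft.union hright
      rwa [Iio_union_Ici, continuousWithinAt_univ] at this
  -- asymptotic velocity
  have hγasymp : Tendsto (fun t : ℝ => t⁻¹ • γ t) atTop (𝓝 vlim) := by
    rw [Metric.tendsto_atTop]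
    intro ε hε
    obtain ⟨n₀', hn₀'⟩ := (Metric.tendsto_atTop.1 hv) (ε/2) (by linarith)
    set n₀ := n₀' + 1 with hn₀def
    have hvn : ∀ m ≥ n₀, ‖v m - vlim‖ < ε/2 := by
      intro m hm
      have := hn₀' m (le_trans (Nat.le_succ n₀') hm)
      rwa [dist_eq_norm] at this
    refine ⟨s n₀, fun t ht => ?_⟩
    set n := N t with hn
    have hn₀n : n₀ ≤ n := hNge t n₀ ht
    have hnpos : 0 < n := lt_of_lt_of_le (Nat.succ_pos n₀') hn₀n
    have hsnt : s n ≤ t := by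
      have h := hN2 t (n-1) (Nat.sub_lt hnpos one_pos)
      have e : n - 1 + 1 = n := Nat.succ_pred_eq_of_pos hnpos
      rwa [e] at h
    have htlt : t < s (n+1) := hN1 t
    set lam := (t - s n) / (s (n+1) - s n) with hlam
    have hlam0 : 0 ≤ lam := div_nonneg (by linarith) (by linarith [hslt n])
    have hlam1 : lam ≤ 1 := by
      rw [hlam, div_le_one (by linarith [hslt n])]
      linarith
    have htval : (1 - lam) * s n + lam * s (n+1) = t := by
      have h : lam * (s (n+1) - s n) = t - s n := by
        rw [hlam, div_mul_cancel₀ _ (hsne n)]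
      linear_combination h
    have hγt : γ t = p n + lam • (p (n+1) - p n) := rfl
    have hid : γ t - t • vlim =
        ((1 - lam) * s n) • (v n - vlim) + (lam * s (n+1)) • (v (n+1) - vlim) := by
      rw [hγt, ← htval]
      simp only [hp]
      module
    have hnorm : ‖γ t - t • vlim‖ ≤ t * (ε/2) := by
      rw [hid]
      have h1 : ‖((1 - lam) * s n) • (v n - vlim)‖ ≤ ((1-lam) * s n) * (ε/2) := by
        rw [norm_smul, Real.norm_eq_abs,
          abs_of_nonneg (mul_nonneg (by linarith) (hspos n).le)]
        exact mul_le_mul_of_nonneg_left (hvn n hn₀n).le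
          (mul_nonneg (by linarith) (hspos n).le)
      have h2 : ‖(lam * s (n+1)) • (v (n+1) - vlim)‖ ≤ (lam * s (n+1)) * (ε/2) := by
        rw [norm_smul, Real.norm_eq_abs,
          abs_of_nonneg (mul_nonneg hlam0 (hspos (n+1)).le)]
        exact mul_le_mul_of_nonneg_left (hvn (n+1) (hn₀n.trans (Nat.le_succ n))).le
          (mul_nonneg hlam0 (hspos (n+1)).le)
      calc ‖_ + _‖ ≤ _ + _ := norm_add_le _ _
        _ ≤ ((1-lam) * s n) * (ε/2) + (lam * s (n+1)) * (ε/2) := add_le_add h1 h2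
        _ = t * (ε/2) := by rw [← htval]; ring
    have htpos : 0 < t := lt_of_lt_of_le (hspos n₀) ht
    have : dist (t⁻¹ • γ t) vlim ≤ ε/2 := by
      rw [dist_eq_norm]
      have : t⁻¹ • γ t - vlim = t⁻¹ • (γ t - t • vlim) := by
        rw [smul_sub, smul_smul, inv_mul_cancel₀ (ne_of_gt htpos), one_smul]
      rw [this, norm_smul, Real.norm_eq_abs, abs_of_pos (inv_pos.2 htpos)]
      calc t⁻¹ * ‖γ t - t • vlim‖ ≤ t⁻¹ * (t * (ε/2)) :=
            mul_le_mul_of_nonneg_left hnorm (inv_pos.2 htpos).le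
        _ = ε/2 := by field_simp
    linarith
  refine ⟨semitraj (s 0) γ, ⟨s 0, γ, hγcont.continuousOn, rfl, hγasymp⟩, fun n => ?_⟩
  refine ⟨s n, hs.monotone (Nat.zero_le n), ?_⟩
  simp only [Prod.mk.injEq, true_and]
  rw [hγp n]

lemma mem_crossSec_cone {Δ : Set E3} {t : ℝ} (ht : 0 < t) {x : E3} :
    x ∈ crossSec (cone Δ) t ↔ t⁻¹ • x ∈ Δ := by
  constructor
  · rintro ⟨τ, hτ, w, hw, heq⟩
    rw [Prod.mk.injEq] at heq
    obtain ⟨rfl, rfl⟩ := heq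
    rwa [inv_smul_smul₀ (ne_of_gt ht)]
  · intro h
    exact ⟨t, ht.le, t⁻¹ • x, h, by rw [smul_inv_smul₀ (ne_of_gt ht)]⟩

lemma lemA (f : Gal ≃ₜ Gal) (hf : AsympIdentical f) (a b : Fin 3 → ℝ)
    (ε : ℝ) (hε : 0 < ε) :
    ∃ T : ℝ, ∀ t ≥ T, crossSec (f '' cone (interval a b)) t ⊆
      crossSec (cone (interval (fun i => a i - ε) (fun i => b i + ε))) t := by
  by_contra hcon
  push_neg at hcon
  have H : ∀ n : ℕ, ∃ t : ℝ, (max (n:ℝ) 1 ≤ t) ∧ ∃ x : E3,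
      x ∈ crossSec (f '' cone (interval a b)) t ∧
      x ∉ crossSec (cone (interval (fun i => a i - ε) (fun i => b i + ε))) t := by
    intro n
    obtain ⟨t, ht, hsub⟩ := hcon (max (n:ℝ) 1)
    obtain ⟨x, hx1, hx2⟩ := Set.not_subset.1 hsub
    exact ⟨t, ht, x, hx1, hx2⟩
  choose t ht x hx1 hx2 using H
  have htlb : ∀ n : ℕ, (n : ℝ) ≤ t n := fun n => (le_max_left _ _).trans (ht n)
  have htpos : ∀ n, 0 < t n := fun n => lt_of_lt_of_le one_pos ((le_max_right _ _).trans (ht n))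
  have httop : Tendsto t atTop atTop :=
    tendsto_atTop_mono htlb tendsto_natCast_atTop_atTop
  have H2 : ∀ n, ∃ σ : ℝ, 0 ≤ σ ∧ ∃ w : E3, w ∈ interval a b ∧
      f (σ, σ • w) = (t n, x n) := by
    intro n
    obtain ⟨q, hq, hfq⟩ := hx1 n
    obtain ⟨σ, hσ, w, hw, rfl⟩ := hq
    exact ⟨σ, hσ, w, hw, hfq⟩
  choose σ hσ0 v hvI hfv using H2
  have hσtop : Tendsto σ atTop atTop := by
    rw [tendsto_atTop]
    intro M
    obtain ⟨NB, hNB⟩ := time_bound f hf.1 M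
    filter_upwards [httop.eventually (eventually_gt_atTop NB)] with n hn
    by_contra hcc
    push_neg at hcc
    have h2 := hNB (σ n, σ n • v n) hcc.le
    rw [hfv n] at h2
    exact absurd h2 (not_le.2 hn)
  obtain ⟨vl, hvlK, φ, hφmono, hφconv⟩ := (isCompact_K a b).tendsto_subseq
    (x := v) (fun n => by exact fun i => ⟨(hvI n i).1.le, (hvI n i).2⟩)
  obtain ⟨ψ₂, hψ₂mono, hsmono, hs1⟩ :=
    exists_subseq_strict (σ ∘ φ) (hσtop.comp hφmono.tendsto_atTop)
  set ψ : ℕ → ℕ := φ ∘ ψ₂ with hψdef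
  have hψmono : StrictMono ψ := hφmono.comp hψ₂mono
  have hstop' : Tendsto (fun k => σ (ψ k)) atTop atTop :=
    hσtop.comp hψmono.tendsto_atTop
  have hvconv : Tendsto (fun k => v (ψ k)) atTop (𝓝 vl) :=
    hφconv.comp hψ₂mono.tendsto_atTop
  obtain ⟨S, hS, hmem⟩ := traj (fun k => σ (ψ k)) hsmono hs1 hstop'
    (fun k => v (ψ k)) vl hvconv
  obtain ⟨T₀, δ, -, hfSeq, hδ⟩ := hf.2.2 vl S hS
  have hk : ∀ k, T₀ ≤ t (ψ k) ∧ x (ψ k) = δ (t (ψ k)) := by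
    intro k
    have h3 : f (σ (ψ k), σ (ψ k) • v (ψ k)) ∈ f '' S := Set.mem_image_of_mem f (hmem k)
    rw [hfv (ψ k), hfSeq, mem_semitraj_iff] at h3
    exact h3
  have hTtop : Tendsto (fun k => t (ψ k)) atTop atTop := by
    refine tendsto_atTop_mono (fun k => ?_) tendsto_natCast_atTop_atTop
    exact le_trans (Nat.cast_le.2 hψmono.le_apply) (htlb (ψ k))
  have hlim : Tendsto (fun k => (t (ψ k))⁻¹ • x (ψ k)) atTop (𝓝 vl) := by
    have h4 := hδ.comp hTtop
    refine h4.congr fun k => ?_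
    simp only [Function.comp_apply, id_eq]
    rw [(hk k).2]
  have hsep : ∀ k, ε ≤ ‖(t (ψ k))⁻¹ • x (ψ k) - v (ψ k)‖ := by
    intro k
    set w := (t (ψ k))⁻¹ • x (ψ k) with hwdef
    have hw : w ∉ interval (fun i => a i - ε) (fun i => b i + ε) := by
      intro hmemw
      exact hx2 (ψ k) ((mem_crossSec_cone (htpos (ψ k))).2 hmemw)
    rw [interval, Set.mem_setOf_eq] at hw
    push_neg at hw
    obtain ⟨i, hi⟩ := hw
    have hvi := hvI (ψ k) i
    have hcoord : ε ≤ |(w - v (ψ k)) i| := by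
      have happ : (w - v (ψ k)) i = w i - v (ψ k) i := rfl
      rw [happ, le_abs]
      by_cases hcase : a i - ε < w i
      · left; linarith [hi hcase, hvi.2]
      · right; linarith [not_lt.1 hcase, hvi.1]
    calc ε ≤ |(w - v (ψ k)) i| := hcoord
      _ ≤ ‖w - v (ψ k)‖ := abs_apply_le_norm _ i
  obtain ⟨K1, hK1⟩ := Metric.tendsto_atTop.1 hlim (ε/2) (half_pos hε)
  obtain ⟨K2, hK2⟩ := Metric.tendsto_atTop.1 hvconv (ε/2) (half_pos hε)
  set k := max K1 K2
  have h5 := hK1 k (le_max_left _ _)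
  have h6 := hK2 k (le_max_right _ _)
  have h7 := hsep k
  rw [dist_eq_norm] at h5 h6
  have h8 : ‖(t (ψ k))⁻¹ • x (ψ k) - v (ψ k)‖ ≤
      ‖(t (ψ k))⁻¹ • x (ψ k) - vl‖ + ‖v (ψ k) - vl‖ := by
    have := norm_sub_le_norm_sub_add_norm_sub ((t (ψ k))⁻¹ • x (ψ k)) vl (v (ψ k))
    calc ‖(t (ψ k))⁻¹ • x (ψ k) - v (ψ k)‖
        ≤ ‖(t (ψ k))⁻¹ • x (ψ k) - vl‖ + ‖vl - v (ψ k)‖ := by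
          have h9 := dist_triangle ((t (ψ k))⁻¹ • x (ψ k)) vl (v (ψ k))
          simpa [dist_eq_norm] using h9
      _ = ‖(t (ψ k))⁻¹ • x (ψ k) - vl‖ + ‖v (ψ k) - vl‖ := by rw [norm_sub_rev vl]
  linarith

lemma lemB (f : Gal ≃ₜ Gal) (hf : AsympIdentical f) (a b : Fin 3 → ℝ)
    (ε : ℝ) (hε : 0 < ε) :
    ∃ T : ℝ, ∀ t ≥ T, crossSec (cone (interval (fun i => a i + ε) (fun i => b i - ε))) t ⊆
      crossSec (f '' cone (interval a b)) t := by
  by_contra hcon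
  push_neg at hcon
  have H : ∀ n : ℕ, ∃ t : ℝ, (max (n:ℝ) 1 ≤ t) ∧ ∃ x : E3,
      x ∈ crossSec (cone (interval (fun i => a i + ε) (fun i => b i - ε))) t ∧
      x ∉ crossSec (f '' cone (interval a b)) t := by
    intro n
    obtain ⟨t, ht, hsub⟩ := hcon (max (n:ℝ) 1)
    obtain ⟨x, hx1, hx2⟩ := Set.not_subset.1 hsub
    exact ⟨t, ht, x, hx1, hx2⟩
  choose t ht x hx1 hx2 using H
  have htlb : ∀ n : ℕ, (n : ℝ) ≤ t n := fun n => (le_max_left _ _).trans (ht n)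
  have htpos : ∀ n, 0 < t n := fun n => lt_of_lt_of_le one_pos ((le_max_right _ _).trans (ht n))
  have httop : Tendsto t atTop atTop :=
    tendsto_atTop_mono htlb tendsto_natCast_atTop_atTop
  set w : ℕ → E3 := fun n => (t n)⁻¹ • x n with hwdef
  have hwI : ∀ n, w n ∈ interval (fun i => a i + ε) (fun i => b i - ε) :=
    fun n => (mem_crossSec_cone (htpos n)).1 (hx1 n)
  have hxw : ∀ n, t n • w n = x n := fun n => smul_inv_smul₀ (htpos n).ne' _
  set q : ℕ → Gal := fun n => f.symm (t n, x n) with hqdef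
  have hfq : ∀ n, f (q n) = (t n, x n) := fun n => f.apply_symm_apply _
  have hqnot : ∀ n, q n ∉ cone (interval a b) := by
    intro n hq
    apply hx2 n
    exact ⟨q n, hq, hfq n⟩
  have hσtop : Tendsto (fun n => (q n).1) atTop atTop := by
    rw [tendsto_atTop]
    intro M
    obtain ⟨NB, hNB⟩ := time_bound f hf.1 M
    filter_upwards [httop.eventually (eventually_gt_atTop NB)] with n hn
    by_contra hcc
    push_neg at hcc
    have h2 := hNB (q n) hcc.le
    rw [hfq n] at h2
    exact absurd h2 (not_le.2 hn)
  obtain ⟨vl, hvlK, φ, hφmono, hφconv⟩ :=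
    (isCompact_K (fun i => a i + ε) (fun i => b i - ε)).tendsto_subseq
    (x := w) (fun n => by exact fun i => ⟨(hwI n i).1.le, (hwI n i).2⟩)
  obtain ⟨ψ₂, hψ₂mono, hsmono, hs1⟩ :=
    exists_subseq_strict (t ∘ φ) (httop.comp hφmono.tendsto_atTop)
  set ψ : ℕ → ℕ := φ ∘ ψ₂ with hψdef
  have hψmono : StrictMono ψ := hφmono.comp hψ₂mono
  have hstop' : Tendsto (fun k => t (ψ k)) atTop atTop :=
    httop.comp hψmono.tendsto_atTop
  have hwconv : Tendsto (fun k => w (ψ k)) atTop (𝓝 vl) :=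
    hφconv.comp hψ₂mono.tendsto_atTop
  obtain ⟨S, hS, hmem⟩ := traj (fun k => t (ψ k)) hsmono hs1 hstop'
    (fun k => w (ψ k)) vl hwconv
  obtain ⟨T₀, δ, -, hfSeq, hδ⟩ := symm_transform f hf vl S hS
  have hk : ∀ k, T₀ ≤ (q (ψ k)).1 ∧ (q (ψ k)).2 = δ ((q (ψ k)).1) := by
    intro k
    have h3 : f.symm (t (ψ k), t (ψ k) • w (ψ k)) ∈ f.symm '' S :=
      Set.mem_image_of_mem _ (hmem k)
    rw [hxw (ψ k)] at h3
    rw [hfSeq, mem_semitraj_iff] at h3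
    exact h3
  have hσψtop : Tendsto (fun k => (q (ψ k)).1) atTop atTop :=
    hσtop.comp hψmono.tendsto_atTop
  have hlim : Tendsto (fun k => ((q (ψ k)).1)⁻¹ • (q (ψ k)).2) atTop (𝓝 vl) := by
    have h4 := hδ.comp hσψtop
    refine h4.congr fun k => ?_
    simp only [Function.comp_apply, id_eq]
    rw [(hk k).2]
  have e1 : ∀ᶠ k in atTop, (0:ℝ) < (q (ψ k)).1 :=
    hσψtop.eventually (eventually_gt_atTop 0)
  have e2 : ∀ᶠ k in atTop, dist (((q (ψ k)).1)⁻¹ • (q (ψ k)).2) vl < ε :=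
    (Metric.tendsto_nhds.1 hlim) ε hε
  obtain ⟨k, hk1, hk2⟩ := (e1.and e2).exists
  apply hqnot (ψ k)
  set z : E3 := ((q (ψ k)).1)⁻¹ • (q (ψ k)).2 with hzdef
  refine ⟨(q (ψ k)).1, hk1.le, z, ?_, ?_⟩
  · intro i
    have hco : |(z - vl) i| ≤ ‖z - vl‖ := abs_apply_le_norm _ i
    have hdist : ‖z - vl‖ < ε := by rwa [dist_eq_norm] at hk2
    have happ : (z - vl) i = z i - vl i := rfl
    rw [happ] at hco
    have habs := abs_lt.1 (lt_of_le_of_lt hco hdist)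
    have hvli := hvlK i
    constructor
    · linarith [habs.2, hvli.1]
    · linarith [habs.1, hvli.2]
  · rw [hzdef, smul_inv_smul₀ (ne_of_gt hk1)]


/-- Let `f` be an asymptotically identical transformation of
`G = ℝ × ℝ³` and `I = (a, b] ⊆ ℝ³` a half-open interval with `aᵢ < bᵢ`.  For every `ε`
with `0 < ε < min{b₁−a₁, b₂−a₂, b₃−a₃}/2`, with `I₋ε := (a+ε, b−ε]` and
`I₊ε := (a−ε, b+ε]`, there exists `t₀` such that for all `t ≥ t₀` one has the inclusions
of time-`t` cross-sections `I₋εᶜ(t) ⊆ f(Iᶜ)(t) ⊆ I₊εᶜ(t)`. -/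
theorem stmt19 (f : Gal ≃ₜ Gal) (hf : AsympIdentical f)
    (a b : Fin 3 → ℝ) (hab : ∀ i, a i < b i)
    (ε : ℝ) (hε : 0 < ε) (hε' : ∀ i, ε < (b i - a i) / 2) :
    ∃ t₀ : ℝ, ∀ t ≥ t₀,
      crossSec (cone (interval (fun i => a i + ε) (fun i => b i - ε))) t ⊆
        crossSec (f '' cone (interval a b)) t ∧
      crossSec (f '' cone (interval a b)) t ⊆
        crossSec (cone (interval (fun i => a i - ε) (fun i => b i + ε))) t := by
  obtain ⟨TB, hTB⟩ := lemB f hf a b ε hε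
  obtain ⟨TA, hTA⟩ := lemA f hf a b ε hε
  exact ⟨max TA TB, fun t htt =>
    ⟨hTB t ((le_max_right _ _).trans htt), hTA t ((le_max_left _ _).trans htt)⟩⟩
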